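/- Let X ~ Q_f where Q_f has density f^{1/2} p_X / P_X(f^{1/2}) w.r.t. the reference measure, and suppose f(x) > 0 P_X-almost surely. Let C be Bernoulli with conditional success probability f*(X) given X, and define the estimator U = P_X(f^{1/2}) · C / f(X)^{1/2}. If f = f*, then E[U] = E_{P_X}[f*] and Var(U) = (∫ f*^{1/2} dP_X)² − (∫ f* dP_X)². -/
import Mathlib


open MeasureTheory ENNReal

/-- Mean and variance of the AVF estimator with the perfect predictor: if
`X ~ Q_{f*}` (density `f*^{1/2}/I` w.r.t. `P_X`, `I = ∫ f*^{1/2} dP_X`), `C` is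
Bernoulli with conditional success probability `f*(X)`, and
`U = I · C / f*(X)^{1/2}`, then `E[U] = ∫ f* dP_X` and
`Var(U) = I² − (∫ f* dP_X)²`. -/
theorem stmt_15 {𝒳 : Type*} [MeasurableSpace 𝒳] (PX : Measure 𝒳) [IsProbabilityMeasure PX]
    (fstar : 𝒳 → ℝ) (hf : Measurable fstar) (hf01 : ∀ x, fstar x ∈ Set.Icc (0:ℝ) 1)
    (hfpos : ∀ᵐ x ∂PX, 0 < fstar x)
    (I : ℝ) (hI : I = ∫ x, Real.sqrt (fstar x) ∂PX) (hIpos : 0 < I)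
    {Ω : Type*} [MeasurableSpace Ω] (ν : Measure Ω) [IsProbabilityMeasure ν]
    (Xv : Ω → 𝒳) (hX : Measurable Xv)
    (hlaw : ν.map Xv = PX.withDensity (fun x => ENNReal.ofReal (Real.sqrt (fstar x) / I)))
    (C : Ω → ℝ) (hC : Measurable C) (hCbin : ∀ ω, C ω = 0 ∨ C ω = 1)
    (hcond : ∀ g : 𝒳 → ℝ, Measurable g →
      ∫ ω, g (Xv ω) * C ω ∂ν = ∫ ω, g (Xv ω) * fstar (Xv ω) ∂ν)
    (U : Ω → ℝ) (hU : ∀ ω, U ω = I * C ω / Real.sqrt (fstar (Xv ω))) :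
    (∫ ω, U ω ∂ν = ∫ x, fstar x ∂PX) ∧
      (∫ ω, (U ω) ^ 2 ∂ν - (∫ ω, U ω ∂ν) ^ 2
        = I ^ 2 - (∫ x, fstar x ∂PX) ^ 2) := by
  -- a.e. positivity of fstar along Xv under ν
  have hsqrt_meas : Measurable fun x => Real.sqrt (fstar x) :=
    Real.continuous_sqrt.measurable.comp hf
  have haeν : ∀ᵐ ω ∂ν, 0 < fstar (Xv ω) := by
    have hS : MeasurableSet {x : 𝒳 | ¬ 0 < fstar x} :=
      (measurableSet_lt measurable_const hf).compl
    have hPX0 : PX {x : 𝒳 | ¬ 0 < fstar x} = 0 := by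
      simpa [ae_iff] using hfpos
    have hQ0 : (PX.withDensity (fun x => ENNReal.ofReal (Real.sqrt (fstar x) / I)))
        {x : 𝒳 | ¬ 0 < fstar x} = 0 :=
      (withDensity_absolutelyContinuous PX _) hPX0
    have : ν (Xv ⁻¹' {x : 𝒳 | ¬ 0 < fstar x}) = 0 := by
      rw [← Measure.map_apply hX hS, hlaw]; exact hQ0
    exact (ae_iff).2 (by simpa [Set.preimage] using this)
  -- change of measure
  have hmap : ∀ h : 𝒳 → ℝ, Measurable h →
      ∫ ω, h (Xv ω) ∂ν = ∫ x, (Real.sqrt (fstar x) / I) * h x ∂PX := by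
    intro h hh
    rw [← integral_map hX.aemeasurable hh.aestronglyMeasurable, hlaw]
    have hd : (fun x => ENNReal.ofReal (Real.sqrt (fstar x) / I))
        = fun x => ((fun x => (Real.sqrt (fstar x) / I).toNNReal) x : ℝ≥0∞) := rfl
    rw [hd, integral_withDensity_eq_integral_smul
      ((hsqrt_meas.div_const I).real_toNNReal) h]
    refine integral_congr_ae (Filter.Eventually.of_forall fun x => ?_)
    have hnn : 0 ≤ Real.sqrt (fstar x) / I :=
      div_nonneg (Real.sqrt_nonneg _) hIpos.le
    simp [NNReal.smul_def, Real.coe_toNNReal _ hnn]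
  set A := ∫ x, fstar x ∂PX with hA
  -- E[U] = A
  have claim1 : ∫ ω, U ω ∂ν = A := by
    have hg : Measurable fun x => I / Real.sqrt (fstar x) :=
      measurable_const.div hsqrt_meas
    have h1 : ∫ ω, U ω ∂ν = ∫ ω, (I / Real.sqrt (fstar (Xv ω))) * C ω ∂ν := by
      refine integral_congr_ae (Filter.Eventually.of_forall fun ω => ?_)
      rw [hU ω, mul_div_right_comm]
    rw [h1, hcond _ hg]
    have h2 : ∫ ω, (I / Real.sqrt (fstar (Xv ω))) * fstar (Xv ω) ∂ν
        = ∫ ω, I * Real.sqrt (fstar (Xv ω)) ∂ν := by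
      refine integral_congr_ae (haeν.mono fun ω hω => ?_)
      dsimp only
      rw [div_mul_eq_mul_div, mul_div_assoc, Real.div_sqrt]
    rw [h2]
    have h3 : ∫ ω, I * Real.sqrt (fstar (Xv ω)) ∂ν
        = I * ∫ ω, Real.sqrt (fstar (Xv ω)) ∂ν := integral_const_mul _ _
    have h4 : ∫ ω, Real.sqrt (fstar (Xv ω)) ∂ν = A / I := by
      rw [hmap _ hsqrt_meas]
      have : ∀ x, (Real.sqrt (fstar x) / I) * Real.sqrt (fstar x) = fstar x / I := by
        intro x
        rw [div_mul_eq_mul_div, Real.mul_self_sqrt (hf01 x).1]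
      simp_rw [this]
      rw [integral_div]
    rw [h3, h4, mul_div_cancel₀ _ hIpos.ne']
  -- E[U²] = I²
  have claim2 : ∫ ω, (U ω) ^ 2 ∂ν = I ^ 2 := by
    have hg : Measurable fun x => I ^ 2 / fstar x := measurable_const.div hf
    have h1 : ∫ ω, (U ω) ^ 2 ∂ν = ∫ ω, (I ^ 2 / fstar (Xv ω)) * C ω ∂ν := by
      refine integral_congr_ae (Filter.Eventually.of_forall fun ω => ?_)
      dsimp only
      rw [hU ω]
      have hCsq : C ω ^ 2 = C ω := by rcases hCbin ω with h | h <;> simp [h]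
      rw [div_pow, mul_pow, Real.sq_sqrt (hf01 (Xv ω)).1, hCsq, mul_div_right_comm]
    rw [h1, hcond _ hg]
    have h2 : ∫ ω, (I ^ 2 / fstar (Xv ω)) * fstar (Xv ω) ∂ν
        = ∫ ω, (I ^ 2 : ℝ) ∂ν := by
      refine integral_congr_ae (haeν.mono fun ω hω => ?_)
      dsimp only
      rw [div_mul_cancel₀ _ hω.ne']
    rw [h2, integral_const]
    simp
  exact ⟨claim1, by rw [claim1, claim2]⟩
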